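/- Let d and r be positive integers with d > r, and fix positive integers A_1,...,A_r. Then the equation x^d = ∏_{i=1}^r A_i^{n_i} · lcm(1,...,n_i) has only finitely many solutions in positive integers (x, n_1,...,n_r). -/

import Mathlib

lemma lcm_icc_ne_zero (n : ℕ) : (Finset.Icc 1 n).lcm id ≠ 0 := by
  rw [Ne, Finset.lcm_eq_zero_iff]
  rintro ⟨a, ha, h0⟩
  simp only [Finset.coe_Icc, Set.mem_Icc, Finset.mem_Icc] at ha
  simp only [id] at h0
  omega

lemma factorization_finset_lcm (q : ℕ) (s : Finset ℕ) (hs : ∀ a ∈ s, a ≠ 0) :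
    (s.lcm id).factorization q = s.sup (fun a => a.factorization q) := by
  induction s using Finset.induction with
  | empty => simp
  | insert a s h ih =>
    have ha : a ≠ 0 := hs a (Finset.mem_insert_self a s)
    have hs' : ∀ b ∈ s, b ≠ 0 := fun b hb => hs b (Finset.mem_insert_of_mem hb)
    have hls : s.lcm id ≠ 0 := by
      rw [Ne, Finset.lcm_eq_zero_iff]
      rintro ⟨b, hb, h0⟩
      exact hs' b hb (by simpa using h0)
    rw [Finset.lcm_insert, Finset.sup_insert, id, lcm_eq_nat_lcm,
      Nat.factorization_lcm ha hls, Finsupp.sup_apply, ih hs']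

/-- For `d > r` and fixed positive integers `A₁,…,A_r`, the equation
`x^d = ∏ Aᵢ^{nᵢ}·lcm(1,…,nᵢ)` has only finitely many solutions in positive integers. -/
theorem finite_solutions_pow_eq_prod_lcm (d r : ℕ) (hd : 0 < d) (hr : 0 < r)
    (hdr : r < d) (A : Fin r → ℕ) (hA : ∀ i, 0 < A i) :
    {p : ℕ × (Fin r → ℕ) |
      0 < p.1 ∧ (∀ i, 0 < p.2 i) ∧
        p.1 ^ d = ∏ i, A i ^ p.2 i * (Finset.Icc 1 (p.2 i)).lcm id}.Finite := by
  set B : ℕ := 2 * (Finset.univ.sup A) + 8 with hB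
  -- Step 1: every solution has all nᵢ ≤ B
  have key : ∀ p ∈ {p : ℕ × (Fin r → ℕ) |
      0 < p.1 ∧ (∀ i, 0 < p.2 i) ∧
        p.1 ^ d = ∏ i, A i ^ p.2 i * (Finset.Icc 1 (p.2 i)).lcm id}, ∀ i, p.2 i ≤ B := by
    rintro ⟨x, n⟩ ⟨hx, hn, heq⟩ i
    by_contra hcon
    push_neg at hcon
    -- let m be the max of the nᵢ
    have hne : (Finset.univ : Finset (Fin r)).Nonempty := by
      have : Nonempty (Fin r) := ⟨⟨0, hr⟩⟩
      exact Finset.univ_nonempty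
    set m : ℕ := Finset.univ.sup n with hm
    have hmB : B < m := lt_of_lt_of_le hcon (Finset.le_sup (Finset.mem_univ i))
    obtain ⟨j, -, hj⟩ := Finset.exists_mem_eq_sup Finset.univ hne n
    -- Bertrand
    obtain ⟨q, hq, hq1, hq2⟩ := Nat.exists_prime_lt_and_le_two_mul (m / 2) (by omega)
    have hqm : q ≤ m := le_trans hq2 (by omega)
    have hqA : ∀ k, A k < q := fun k =>
      lt_of_le_of_lt (le_trans (Finset.le_sup (Finset.mem_univ k)) (by omega)) hq1
    have hq4 : 4 ≤ q := by omega
    have hq2m : q * q > m := by nlinarith [Nat.div_mul_le_self m 2, Nat.lt_div_mul_add (show 0 < 2 by norm_num) (a := m)]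
    -- valuation of each lcm factor
    have hval : ∀ k, ((Finset.Icc 1 (n k)).lcm id).factorization q ≤ 1 := by
      intro k
      rw [factorization_finset_lcm q _ (by intro a ha; simp only [Finset.mem_Icc] at ha; omega)]
      apply Finset.sup_le
      intro a ha
      simp only [Finset.mem_Icc] at ha
      by_contra hc
      push_neg at hc
      have : q ^ 2 ∣ a := dvd_trans (pow_dvd_pow q hc) (Nat.ordProj_dvd a q)
      have h2 : q ^ 2 ≤ a := Nat.le_of_dvd (by omega) this
      have : a ≤ m := le_trans ha.2 (Finset.le_sup (Finset.mem_univ k))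
      nlinarith [sq_nonneg q]
    have hvalj : 1 ≤ ((Finset.Icc 1 (n j)).lcm id).factorization q := by
      have hqmem : q ∈ Finset.Icc 1 (n j) := by
        simp only [Finset.mem_Icc]
        constructor
        · exact hq.one_lt.le.trans' (by norm_num)
        · have hmj : m = n j := hm.trans hj
          omega
      have hdvd : q ∣ (Finset.Icc 1 (n j)).lcm id := Finset.dvd_lcm hqmem
      have := (Nat.Prime.dvd_iff_one_le_factorization hq (lcm_icc_ne_zero (n j))).mp hdvd
      exact this
    -- compute factorization of both sides at q
    have hAfac : ∀ k, (A k).factorization q = 0 := fun k =>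
      Nat.factorization_eq_zero_of_lt (hqA k)
    have hfacs : ∀ k, (A k ^ n k * (Finset.Icc 1 (n k)).lcm id) ≠ 0 := fun k =>
      mul_ne_zero (pow_ne_zero _ (hA k).ne') (lcm_icc_ne_zero _)
    have hrhs : (∏ k, A k ^ n k * (Finset.Icc 1 (n k)).lcm id).factorization q
        = ∑ k, ((Finset.Icc 1 (n k)).lcm id).factorization q := by
      rw [Nat.factorization_prod (fun k _ => hfacs k)]
      rw [Finsupp.finset_sum_apply]
      apply Finset.sum_congr rfl
      intro k _
      rw [Nat.factorization_mul (pow_ne_zero _ (hA k).ne') (lcm_icc_ne_zero _),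
        Finsupp.add_apply, Nat.factorization_pow, Finsupp.smul_apply, hAfac k]
      simp
    have hlhs : (x ^ d).factorization q = d * x.factorization q := by
      rw [Nat.factorization_pow, Finsupp.smul_apply]; simp
    have heq' : d * x.factorization q
        = ∑ k, ((Finset.Icc 1 (n k)).lcm id).factorization q := by
      rw [← hlhs, heq, hrhs]
    have hub : ∑ k, ((Finset.Icc 1 (n k)).lcm id).factorization q ≤ r := by
      calc ∑ k, ((Finset.Icc 1 (n k)).lcm id).factorization q
          ≤ ∑ _k : Fin r, 1 := Finset.sum_le_sum (fun k _ => hval k)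
        _ = r := by simp
    have hlb : 1 ≤ ∑ k, ((Finset.Icc 1 (n k)).lcm id).factorization q :=
      le_trans hvalj (Finset.single_le_sum (f := fun k => ((Finset.Icc 1 (n k)).lcm id).factorization q) (fun k _ => Nat.zero_le _) (Finset.mem_univ j))
    have hx1 : 1 ≤ x.factorization q := by
      by_contra hcc
      push_neg at hcc
      interval_cases h : x.factorization q <;> omega
    have : d ≤ d * x.factorization q := Nat.le_mul_of_pos_right d hx1
    omega
  -- Step 2: bound x
  set L : ℕ := (Finset.Icc 1 B).lcm id with hL
  set M : ℕ := ∏ k, A k ^ B * L with hM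
  have hxbound : ∀ p ∈ {p : ℕ × (Fin r → ℕ) |
      0 < p.1 ∧ (∀ i, 0 < p.2 i) ∧
        p.1 ^ d = ∏ i, A i ^ p.2 i * (Finset.Icc 1 (p.2 i)).lcm id}, p.1 ≤ M := by
    rintro ⟨x, n⟩ hp
    obtain ⟨hx, hn, heq⟩ := hp
    have h1 : x ≤ x ^ d := Nat.le_self_pow hd.ne' x
    have h2 : x ^ d ≤ M := by
      rw [heq, hM]
      apply Finset.prod_le_prod
      · intro k _; positivity
      · intro k _
        have hnk : n k ≤ B := key ⟨x, n⟩ ⟨hx, hn, heq⟩ k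
        apply Nat.mul_le_mul
        · exact Nat.pow_le_pow_right (hA k) hnk
        · exact Nat.le_of_dvd (Nat.pos_of_ne_zero (lcm_icc_ne_zero B))
            (Finset.lcm_mono (by
              intro a ha; simp only [Finset.mem_Icc] at *; omega))
    omega
  -- Step 3: finiteness
  apply Set.Finite.subset (Set.Finite.prod (Set.finite_Iic M)
    (Set.Finite.pi (fun _ : Fin r => Set.finite_Iic B)))
  rintro ⟨x, n⟩ hp
  refine ⟨hxbound ⟨x, n⟩ hp, ?_⟩
  intro k _
  exact key ⟨x, n⟩ hp k
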